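/- Let c and t be positive integers with c ≥ 6 and c ≥ 4·log₂ t + 7, and set k = t+3. With θ, g, f₀ as defined by θ(c,k,z) = (1/(k-z)!)·∏_{i=z}^{k-1} binom((k-i)c,c), g(c,k,t,z) = θ(c,k,z)·binom(z,t)·∏_{j=1}^{z-t}(k-(t+j-1)), f₀(c,k,t) = (k-t-1)·θ(c,k,t+1) − binom(k-t-1,2)·θ(c,k,t+2), we have g(c,t+3,t,t+1)·g(c,t+3,t,t+3) < f₀(c,t+3,t)². -/

import Mathlib

open Finset

/-- `UParts c k ℓ S`: `S` is a family of `ℓ` pairwise disjoint `c`-subsets of `[ck]`. -/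
def UParts (c k ℓ : ℕ) (S : Finset (Finset (Fin (c * k)))) : Prop :=
  S.card = ℓ ∧ (∀ e ∈ S, e.card = c) ∧
    ∀ e ∈ S, ∀ f ∈ S, e ≠ f → Disjoint e f

/-- `UPartition c k F`: `F` is a `c`-uniform partition of `[ck]` into `k` blocks. -/
def UPartition (c k : ℕ) (F : Finset (Finset (Fin (c * k)))) : Prop :=
  UParts c k k F ∧ ∀ x : Fin (c * k), ∃ e ∈ F, x ∈ e

/-- Cross `t`-intersecting families: any two members from different families share `≥ t` blocks. -/
def CrossInt (c k t : ℕ) (F G : Finset (Finset (Finset (Fin (c * k))))) : Prop :=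
  ∀ A ∈ F, ∀ B ∈ G, t ≤ (A ∩ B).card

/-- `S` is a `t`-cover of the family `F`: a family of pairwise disjoint `c`-subsets meeting
every member of `F` in at least `t` blocks. -/
def IsTCover (c k t : ℕ) (F : Finset (Finset (Finset (Fin (c * k)))))
    (S : Finset (Finset (Fin (c * k)))) : Prop :=
  UParts c k S.card S ∧ ∀ A ∈ F, t ≤ (S ∩ A).card

/-- The `t`-covering number: minimum size of a `t`-cover. -/
noncomputable def tau (c k t : ℕ) (F : Finset (Finset (Finset (Fin (c * k))))) : ℕ :=
  sInf {s | ∃ S, IsTCover c k t F S ∧ S.card = s}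

/-- `θ(c,k,z) = (1/(k-z)!) · ∏_{i=z}^{k-1} C((k-i)c, c)`. -/
def theta (c k z : ℕ) : ℚ :=
  (1 / ((k - z).factorial : ℚ)) * ∏ i ∈ Finset.Ico z k, ((((k - i) * c).choose c : ℕ) : ℚ)

/-- `g(c,k,t,z) = θ(c,k,z)·C(z,t)·∏_{j=1}^{z-t}(k-(t+j-1))`. -/
def gfun (c k t z : ℕ) : ℚ :=
  theta c k z * ((z.choose t : ℕ) : ℚ) * ∏ j ∈ Finset.Icc 1 (z - t), ((k - (t + j - 1) : ℕ) : ℚ)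

/-- `f₀(c,k,t) = (k-t-1)·θ(c,k,t+1) − C(k-t-1,2)·θ(c,k,t+2)`. -/
def f0 (c k t : ℕ) : ℚ :=
  ((k - t - 1 : ℕ) : ℚ) * theta c k (t + 1) - (((k - t - 1).choose 2 : ℕ) : ℚ) * theta c k (t + 2)

/-- `f₂(c,k,t) = (t+2)·θ(c,k,t+1) − (t+1)(k-t-1)·θ(c,k,t+2)`. -/
def f2q (c k t : ℕ) : ℚ :=
  ((t : ℚ) + 2) * theta c k (t + 1) - ((t : ℚ) + 1) * ((k - t - 1 : ℕ) : ℚ) * theta c k (t + 2)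


section Aux

private lemma theta_t1 (c t : ℕ) : theta c (t+3) (t+1) = ((2*c).choose c : ℚ)/2 := by
  unfold theta
  rw [show t+3 = (t+1)+2 by ring, Finset.prod_Ico_eq_prod_range]
  simp [Finset.prod_range_succ, Nat.add_sub_cancel_left]
  norm_num [show (t+1)+2-(t+1+1) = 1 by omega, show t+1+2-(t+1) = 2 by omega]
  ring

private lemma theta_t2 (c t : ℕ) : theta c (t+3) (t+2) = 1 := by
  unfold theta
  rw [show t+3 = (t+2)+1 by ring, Finset.prod_Ico_eq_prod_range]
  simp [Nat.add_sub_cancel_left]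

private lemma theta_t3 (c t : ℕ) : theta c (t+3) (t+3) = 1 := by
  unfold theta; simp

private lemma choose3_eq (t : ℕ) : 6 * ((t+3).choose t) = (t+1)*(t+2)*(t+3) := by
  have h1 : (t+3).choose t = (t+3).choose 3 := by
    rw [← Nat.choose_symm (by omega)]; congr 1; omega
  have h2 := Nat.descFactorial_eq_factorial_mul_choose (t+3) 3
  simp [Nat.descFactorial, Nat.factorial] at h2
  rw [h1]; ring_nf; ring_nf at h2; omega

private lemma pow_ge (c t : ℕ) (ht : 1 ≤ t) (hcond : 4 * Real.logb 2 t + 7 ≤ (c : ℝ)) :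
    128 * t^4 ≤ 2^c := by
  have htp : (0:ℝ) < t := by exact_mod_cast ht
  have h2 : (2:ℝ) ^ (4 * Real.logb 2 t + 7) ≤ (2:ℝ) ^ (c:ℝ) :=
    Real.rpow_le_rpow_of_exponent_le one_le_two hcond
  have h3 : (2:ℝ) ^ (4 * Real.logb 2 t + 7) = 128 * (t:ℝ)^4 := by
    rw [Real.rpow_add two_pos, show (4:ℝ) * Real.logb 2 t = Real.logb 2 t * 4 by ring,
      Real.rpow_mul (by norm_num), Real.rpow_logb two_pos (by norm_num) htp,
      show (7:ℝ) = ((7:ℕ):ℝ) by norm_num, Real.rpow_natCast,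
      show (4:ℝ) = ((4:ℕ):ℝ) by norm_num, Real.rpow_natCast]
    norm_num; ring
  have h4 : (128 * t^4 : ℝ) ≤ (2:ℝ)^c := by
    rw [← Real.rpow_natCast 2 c, ← h3]; exact h2
  exact_mod_cast h4

private lemma central_ge (c : ℕ) (hc : 6 ≤ c) : 2^c ≤ (2*c).choose c := by
  have h := Nat.four_pow_lt_mul_centralBinom c (by omega)
  have h1 : c * 2^c ≤ 4^c := by
    calc c * 2^c ≤ 2^c * 2^c := by
          exact Nat.mul_le_mul_right _ (Nat.lt_two_pow_self (n := c)).le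
      _ = 4^c := by rw [← Nat.mul_pow]
  have h2 := lt_of_le_of_lt h1 h
  unfold Nat.centralBinom at h2
  exact Nat.le_of_mul_le_mul_left (le_of_lt h2) (by omega)

end Aux

theorem stmt14 (c t : ℕ) (hc : 6 ≤ c) (ht : 1 ≤ t)
    (hcond : 4 * Real.logb 2 t + 7 ≤ (c : ℝ)) :
    gfun c (t + 3) t (t + 1) * gfun c (t + 3) t (t + 3) < (f0 c (t + 3) t) ^ 2 := by

  have hN : 128 * (t:ℚ)^4 ≤ (((2*c).choose c : ℕ) : ℚ) := by
    have := le_trans (pow_ge c t ht hcond) (central_ge c hc)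
    exact_mod_cast this
  have htq : (1:ℚ) ≤ t := by exact_mod_cast ht
  set N : ℚ := (((2*c).choose c : ℕ) : ℚ) with hNdef
  have hg1 : gfun c (t+3) t (t+1) = N/2 * (t+1) * 3 := by
    unfold gfun
    rw [theta_t1, Nat.choose_succ_self_right,
      show Finset.Icc 1 (t+1-t) = {1} by rw [show t+1-t = 1 by omega]; rfl]
    norm_num [show t+3-(t+1-1) = 3 by omega]
    exact Or.inl hNdef.symm
  have hg3 : gfun c (t+3) t (t+3) = ((t:ℚ)+1) * ((t:ℚ)+2) * ((t:ℚ)+3) := by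
    have hprod : ∏ j ∈ Finset.Icc 1 (t+3-t), (((t+3) - (t + j - 1) : ℕ) : ℚ) = 6 := by
      rw [show t+3-t = 3 by omega, show Finset.Icc 1 3 = {1,2,3} from rfl]
      norm_num [show t+3-(t+1-1)=3 by omega, show t+3-(t+2-1)=2 by omega,
        show t+3-(t+3-1)=1 by omega]
    unfold gfun
    rw [theta_t3, hprod, one_mul]
    have h6q : ((6 * (t+3).choose t : ℕ):ℚ) = (((t+1)*(t+2)*(t+3):ℕ):ℚ) := by
      rw [choose3_eq t]
    push_cast at h6q
    linarith
  have hf0 : f0 c (t+3) t = N - 1 := by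
    unfold f0
    rw [theta_t1, theta_t2, show t+3-t-1 = 2 by omega]
    norm_num
    ring
  rw [hg1, hg3, hf0]
  have ht4 : (1:ℚ) ≤ (t:ℚ)^4 := one_le_pow₀ htq
  have h128 : (128:ℚ) ≤ N := by nlinarith
  have hNpos : (0:ℚ) < N := by linarith
  have hp : ((t:ℚ)+1)^2*((t:ℚ)+2)*((t:ℚ)+3) ≤ 48*(t:ℚ)^4 := by
    nlinarith [sq_nonneg ((t:ℚ)-1), sq_nonneg ((t:ℚ)^2-1), htq, mul_le_mul_of_nonneg_left htq (le_of_lt (lt_of_lt_of_le zero_lt_one htq))]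
  have hA : N/2*((t:ℚ)+1)*3 * (((t:ℚ)+1)*((t:ℚ)+2)*((t:ℚ)+3))
      = 3/2*N*(((t:ℚ)+1)^2*((t:ℚ)+2)*((t:ℚ)+3)) := by ring
  have hB : 3/2*N*(((t:ℚ)+1)^2*((t:ℚ)+2)*((t:ℚ)+3)) ≤ 3/2*N*(48*(t:ℚ)^4) :=
    mul_le_mul_of_nonneg_left hp (by positivity)
  have hC : 72*(N*(t:ℚ)^4) ≤ 9/16*(N*N) := by
    nlinarith [mul_le_mul_of_nonneg_left hN (show (0:ℚ) ≤ 9/16*N by positivity)]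
  have hD : 9/16*(N*N) < (N-1)^2 := by
    nlinarith [mul_le_mul_of_nonneg_left h128 (show (0:ℚ) ≤ 7/16*N by positivity)]
  rw [hA]
  nlinarith [hB, hC, hD]
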